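/- (Diaz–Margolis fixed point alternative) Let (X,d) be a complete generalized metric space (d may take the value ∞) and J : X → X strictly contractive with Lipschitz constant L < 1. If there exists a nonnegative integer k and x ∈ X with d(J^k x, J^{k+1} x) < ∞, then: (1) the sequence J^n x converges to a fixed point x* of J; (2) x* is the unique fixed point of J in the set Y = {y ∈ X : d(J^k x, y) < ∞}; (3) d(y, x*) ≤ d(y, Jy)/(1−L) for all y ∈ Y. -/

import Mathlib

open scoped ENNReal NNReal

theorem stmt_7
    {X : Type*} (d : X → X → ℝ≥0∞)
    (hd0 : ∀ a b : X, d a b = 0 ↔ a = b)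
    (hdsymm : ∀ a b : X, d a b = d b a)
    (hdtri : ∀ a b c : X, d a c ≤ d a b + d b c)
    (hcomplete : ∀ u : ℕ → X,
      (∀ ε : ℝ≥0∞, 0 < ε → ∃ N, ∀ m ≥ N, ∀ n ≥ N, d (u m) (u n) < ε) →
      ∃ l : X, ∀ ε : ℝ≥0∞, 0 < ε → ∃ N, ∀ n ≥ N, d (u n) l < ε)
    (J : X → X) (L : ℝ≥0) (hL : L < 1)
    (hcontr : ∀ a b : X, d (J a) (J b) ≤ (L : ℝ≥0∞) * d a b)
    (k : ℕ) (x : X) (hfin : d (J^[k] x) (J^[k + 1] x) < ⊤) :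
    ∃ xstar : X, J xstar = xstar ∧
      (∀ ε : ℝ≥0∞, 0 < ε → ∃ N, ∀ n ≥ N, d (J^[n] x) xstar < ε) ∧
      (∀ y : X, d (J^[k] x) y < ⊤ → J y = y → y = xstar) ∧
      (∀ y : X, d (J^[k] x) y < ⊤ → d y xstar ≤ d y (J y) / (1 - (L : ℝ≥0∞))) := by
  set D := d (J^[k] x) (J^[k + 1] x) with hD
  have hL1 : (L : ℝ≥0∞) < 1 := by exact_mod_cast hL
  have hLle : (L : ℝ≥0∞) ≤ 1 := hL1.le
  have hsub0 : (1 : ℝ≥0∞) - L ≠ 0 := by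
    exact (tsub_pos_of_lt hL1).ne'
  have hsubtop : (1 : ℝ≥0∞) - L ≠ ⊤ := by
    exact (tsub_le_self.trans_lt (by norm_num : (1:ℝ≥0∞) < ⊤)).ne
  have hinvtop : ((1 : ℝ≥0∞) - L)⁻¹ ≠ ⊤ := ENNReal.inv_ne_top.mpr hsub0
  set C : ℝ≥0∞ := D * ((1 : ℝ≥0∞) - L)⁻¹ with hC
  have hCtop : C ≠ ⊤ := ENNReal.mul_ne_top hfin.ne hinvtop
  -- iterated contraction
  have contr_iter : ∀ (m : ℕ) (a b : X), d (J^[m] a) (J^[m] b) ≤ (L : ℝ≥0∞) ^ m * d a b := by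
    intro m
    induction m with
    | zero => intro a b; simp
    | succ m ih =>
      intro a b
      rw [Function.iterate_succ_apply', Function.iterate_succ_apply']
      calc d (J (J^[m] a)) (J (J^[m] b)) ≤ (L : ℝ≥0∞) * d (J^[m] a) (J^[m] b) := hcontr _ _
        _ ≤ (L : ℝ≥0∞) * ((L : ℝ≥0∞) ^ m * d a b) := by gcongr; exact ih a b
        _ = (L : ℝ≥0∞) ^ (m + 1) * d a b := by ring
  have hstep : ∀ q, d (J^[k + q] x) (J^[k + q + 1] x) ≤ (L : ℝ≥0∞) ^ q * D := by
    intro q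
    have h := contr_iter q (J^[k] x) (J^[k + 1] x)
    rw [← Function.iterate_add_apply, ← Function.iterate_add_apply] at h
    have e1 : q + k = k + q := Nat.add_comm q k
    have e2 : q + (k + 1) = k + q + 1 := by omega
    rw [e1, e2] at h
    exact h
  -- partial sums bound
  have hsum : ∀ p m, d (J^[k + p] x) (J^[k + (p + m)] x) ≤
      (∑ j ∈ Finset.range m, (L : ℝ≥0∞) ^ (p + j)) * D := by
    intro p m
    induction m with
    | zero =>
      simp [(hd0 _ _).mpr rfl]
    | succ m ih =>
      have e : k + (p + (m + 1)) = k + (p + m) + 1 := by omega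
      rw [e]
      calc d (J^[k + p] x) (J^[k + (p + m) + 1] x)
          ≤ d (J^[k + p] x) (J^[k + (p + m)] x) + d (J^[k + (p + m)] x) (J^[k + (p + m) + 1] x) :=
            hdtri _ _ _
        _ ≤ (∑ j ∈ Finset.range m, (L : ℝ≥0∞) ^ (p + j)) * D + (L : ℝ≥0∞) ^ (p + m) * D :=
            add_le_add ih (hstep (p + m))
        _ = (∑ j ∈ Finset.range (m + 1), (L : ℝ≥0∞) ^ (p + j)) * D := by
            rw [Finset.sum_range_succ, add_mul]
  have hgeom : ∀ p m, (∑ j ∈ Finset.range m, (L : ℝ≥0∞) ^ (p + j)) ≤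
      (L : ℝ≥0∞) ^ p * ((1 : ℝ≥0∞) - L)⁻¹ := by
    intro p m
    calc (∑ j ∈ Finset.range m, (L : ℝ≥0∞) ^ (p + j))
        = (L : ℝ≥0∞) ^ p * ∑ j ∈ Finset.range m, (L : ℝ≥0∞) ^ j := by
          rw [Finset.mul_sum]; congr 1; ext j; rw [pow_add]
      _ ≤ (L : ℝ≥0∞) ^ p * ∑' j : ℕ, (L : ℝ≥0∞) ^ j := by
          gcongr; exact ENNReal.sum_le_tsum _
      _ = (L : ℝ≥0∞) ^ p * ((1 : ℝ≥0∞) - L)⁻¹ := by rw [ENNReal.tsum_geometric]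
  have hB : ∀ p m, d (J^[k + p] x) (J^[k + (p + m)] x) ≤ (L : ℝ≥0∞) ^ p * C := by
    intro p m
    calc d (J^[k + p] x) (J^[k + (p + m)] x)
        ≤ (∑ j ∈ Finset.range m, (L : ℝ≥0∞) ^ (p + j)) * D := hsum p m
      _ ≤ ((L : ℝ≥0∞) ^ p * ((1 : ℝ≥0∞) - L)⁻¹) * D := by gcongr; exact hgeom p m
      _ = (L : ℝ≥0∞) ^ p * C := by rw [hC]; ring
  -- small powers
  have hpow : ∀ (K : ℝ≥0∞), K ≠ ⊤ → ∀ ε : ℝ≥0∞, 0 < ε →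
      ∃ p, ∀ q ≥ p, (L : ℝ≥0∞) ^ q * K < ε := by
    intro K hK ε hε
    have htend : Filter.Tendsto (fun q : ℕ => (L : ℝ≥0∞) ^ q * K) Filter.atTop (nhds 0) := by
      have h0 := ENNReal.tendsto_pow_atTop_nhds_zero_of_lt_one hL1
      have := ENNReal.Tendsto.mul_const h0 (Or.inr hK)
      simpa using this
    have := htend.eventually_lt_const hε
    exact Filter.eventually_atTop.mp this
  -- monotone bound for all pairs beyond k + p
  have hB' : ∀ p m n, k + p ≤ m → k + p ≤ n → d (J^[m] x) (J^[n] x) ≤ (L : ℝ≥0∞) ^ p * C := by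
    have key : ∀ p m n, k + p ≤ m → m ≤ n → d (J^[m] x) (J^[n] x) ≤ (L : ℝ≥0∞) ^ p * C := by
      intro p m n hm hmn
      obtain ⟨a, rfl⟩ := Nat.exists_eq_add_of_le hm
      obtain ⟨b, rfl⟩ := Nat.exists_eq_add_of_le hmn
      have e : k + p + a = k + (p + a) := by omega
      have e2 : k + p + a + b = k + ((p + a) + b) := by omega
      rw [e, e2] at *
      calc d (J^[k + (p + a)] x) (J^[k + (p + a + b)] x) ≤ (L : ℝ≥0∞) ^ (p + a) * C := hB _ _
        _ ≤ (L : ℝ≥0∞) ^ p * C :=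
            mul_le_mul_left (pow_le_pow_of_le_one zero_le hLle (Nat.le_add_right p a)) C
    intro p m n hm hn
    rcases le_total m n with h | h
    · exact key p m n hm h
    · rw [hdsymm]; exact key p n m hn h
  -- Cauchy
  have hcauchy : ∀ ε : ℝ≥0∞, 0 < ε → ∃ N, ∀ m ≥ N, ∀ n ≥ N,
      d (J^[m] x) (J^[n] x) < ε := by
    intro ε hε
    obtain ⟨p, hp⟩ := hpow C hCtop ε hε
    refine ⟨k + p, fun m hm n hn => ?_⟩
    exact lt_of_le_of_lt (hB' p m n hm hn) (hp p le_rfl)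
  obtain ⟨xstar, hlim⟩ := hcomplete (fun n => J^[n] x) hcauchy
  have aux : ∀ z : ℝ≥0∞, (∀ ε : ℝ≥0∞, 0 < ε → z < ε) → z = 0 := by
    intro z h
    by_contra h0
    exact absurd (h z (pos_iff_ne_zero.mpr h0)) (lt_irrefl z)
  -- fixed point
  have hfix : J xstar = xstar := by
    rw [← hd0]
    apply aux
    intro ε hε
    have hε2 : (0 : ℝ≥0∞) < ε / 2 := ENNReal.half_pos hε.ne'
    obtain ⟨N, hN⟩ := hlim (ε / 2) hε2
    have h1 : d (J^[N] x) xstar < ε / 2 := hN N le_rfl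
    have h2 : d (J^[N + 1] x) xstar < ε / 2 := hN (N + 1) (Nat.le_succ N)
    have step1 : d (J xstar) xstar ≤ d (J xstar) (J^[N + 1] x) + d (J^[N + 1] x) xstar :=
      hdtri _ _ _
    have step2 : d (J xstar) (J^[N + 1] x) ≤ d (J^[N] x) xstar := by
      rw [Function.iterate_succ_apply']
      calc d (J xstar) (J (J^[N] x)) ≤ (L : ℝ≥0∞) * d xstar (J^[N] x) := hcontr _ _
        _ ≤ d xstar (J^[N] x) := mul_le_of_le_one_left zero_le hLle
        _ = d (J^[N] x) xstar := hdsymm _ _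
    calc d (J xstar) xstar ≤ d (J^[N] x) xstar + d (J^[N + 1] x) xstar := by
          exact step1.trans (by gcongr)
      _ < ε / 2 + ε / 2 := ENNReal.add_lt_add h1 h2
      _ = ε := ENNReal.add_halves ε
  -- bound on d (J^[k] x) xstar
  have hkfin : d (J^[k] x) xstar < ⊤ := by
    obtain ⟨N, hN⟩ := hlim 1 one_pos
    have h1 : d (J^[k] x) (J^[k + (0 + N)] x) ≤ (L : ℝ≥0∞) ^ 0 * C := by
      have := hB 0 N
      simpa using this
    calc d (J^[k] x) xstar ≤ d (J^[k] x) (J^[k + (0 + N)] x) + d (J^[k + (0 + N)] x) xstar :=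
          hdtri _ _ _
      _ ≤ (L : ℝ≥0∞) ^ 0 * C + 1 :=
          add_le_add h1 (hN _ (by omega)).le
      _ < ⊤ := by
          simp only [pow_zero, one_mul]
          exact ENNReal.add_lt_top.mpr ⟨hCtop.lt_top, ENNReal.one_lt_top⟩
  -- uniqueness
  have huniq : ∀ y : X, d (J^[k] x) y < ⊤ → J y = y → y = xstar := by
    intro y hy hJy
    rw [← hd0]
    apply aux
    intro ε hε
    have hε2 : (0 : ℝ≥0∞) < ε / 2 := ENNReal.half_pos hε.ne'
    obtain ⟨N, hN⟩ := hlim (ε / 2) hε2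
    obtain ⟨p, hp⟩ := hpow (d (J^[k] x) y) hy.ne (ε / 2) hε2
    set m := max p N with hm
    have hym : d y (J^[k + m] x) ≤ (L : ℝ≥0∞) ^ m * d (J^[k] x) y := by
      have hyit : J^[m] y = y := Function.iterate_fixed hJy m
      have h := contr_iter m y (J^[k] x)
      rw [hyit, ← Function.iterate_add_apply] at h
      rw [Nat.add_comm m k] at h
      calc d y (J^[k + m] x) ≤ (L : ℝ≥0∞) ^ m * d y (J^[k] x) := h
        _ = (L : ℝ≥0∞) ^ m * d (J^[k] x) y := by rw [hdsymm]
    calc d y xstar ≤ d y (J^[k + m] x) + d (J^[k + m] x) xstar := hdtri _ _ _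
      _ < ε / 2 + ε / 2 :=
          ENNReal.add_lt_add (lt_of_le_of_lt hym (hp m (le_max_left p N)))
            (hN (k + m) (le_trans (le_max_right p N) (Nat.le_add_left m k)))
      _ = ε := ENNReal.add_halves ε
  refine ⟨xstar, hfix, hlim, huniq, ?_⟩
  -- estimate
  intro y hy
  have hyfin : d y xstar < ⊤ := by
    calc d y xstar ≤ d y (J^[k] x) + d (J^[k] x) xstar := hdtri _ _ _
      _ < ⊤ := ENNReal.add_lt_top.mpr ⟨by rw [hdsymm]; exact hy, hkfin⟩
  set F := d y xstar with hF
  have hkey : F ≤ d y (J y) + (L : ℝ≥0∞) * F := by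
    calc F ≤ d y (J y) + d (J y) xstar := hdtri _ _ _
      _ = d y (J y) + d (J y) (J xstar) := by rw [hfix]
      _ ≤ d y (J y) + (L : ℝ≥0∞) * F := by gcongr; exact hcontr _ _
  have hmul : ((1 : ℝ≥0∞) - L) * F ≤ d y (J y) := by
    have hLF : (L : ℝ≥0∞) * F ≠ ⊤ := ENNReal.mul_ne_top ENNReal.coe_ne_top hyfin.ne
    have : ((1 : ℝ≥0∞) - L) * F = F - (L : ℝ≥0∞) * F := by
      rw [ENNReal.sub_mul (fun _ _ => hyfin.ne), one_mul]
    rw [this]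
    rw [tsub_le_iff_right]
    calc F ≤ d y (J y) + (L : ℝ≥0∞) * F := hkey
      _ = d y (J y) + (L : ℝ≥0∞) * F := rfl
  rw [ENNReal.le_div_iff_mul_le (Or.inl hsub0) (Or.inl hsubtop)]
  calc F * ((1 : ℝ≥0∞) - L) = ((1 : ℝ≥0∞) - L) * F := mul_comm _ _
    _ ≤ d y (J y) := hmul
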